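/- arXiv:1710.09146 — 3 statements merged into one kernel-verified Lean document; each statement's English description precedes it below -/
import Mathlib

section
/- For the one-sample normal test with unknown variance using cake priors, letting h → ∞ the Bayesian test statistic equals λ_Bayes = n ln(σ̂₀²) − n ln(σ̂₁²) − ln n, where σ̂₀² = n⁻¹‖x − μ₀𝟙‖² and σ̂₁² = n⁻¹‖x − x̄𝟙‖². -/
open Real MeasureTheory

lemma cake_key (s a : ℝ) (hs : 0 < s) (ha : 0 < a) :
    ∫ t in Set.Ioi (0:ℝ), Real.exp (-(s+1) * Real.log t - a / t)
      = (1/a) ^ s * Real.Gamma s := by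
  rw [← Real.integral_rpow_mul_exp_neg_mul_Ioi hs ha]
  rw [← MeasureTheory.integral_comp_rpow_Ioi
      (fun y => y ^ (s-1) * Real.exp (-(a*y))) (p := -1) (by norm_num)]
  apply setIntegral_congr_fun measurableSet_Ioi
  intro t ht
  have ht' : (0:ℝ) < t := ht
  simp only [smul_eq_mul, Real.rpow_neg_one]
  rw [Real.inv_rpow ht'.le, ← Real.rpow_neg ht'.le]
  have h2 : t ^ ((-1:ℝ)-1) = t ^ (-2:ℝ) := by norm_num
  rw [h2, ← mul_assoc, mul_assoc (|(-1:ℝ)|), ← Real.rpow_add ht']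
  have h3 : (-2:ℝ) + -(s-1) = -(s+1) := by ring
  rw [h3, abs_neg, abs_one, one_mul]
  rw [Real.rpow_def_of_pos ht', ← Real.exp_add]
  congr 1
  field_simp
  ring

/-- One-sample normal test with unknown variance and cake priors: in the limit
h → ∞, λ_Bayes = −2 ln(p(x|H₀)/p(x|H₁)) = n ln σ̂₀² − n ln σ̂₁² − ln n. -/
theorem one_sample_cake_bayes_statistic (n : ℕ) (hn : 1 ≤ n) (μ₀ : ℝ)
    (x : Fin n → ℝ)
    (s0 s1 : ℝ)
    (hs0 : s0 = (∑ i, (x i - μ₀) ^ 2) / n)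
    (hs1 : s1 = (∑ i, (x i - (∑ j, x j) / n) ^ 2) / n)
    (hs0pos : 0 < s0) (hs1pos : 0 < s1) :
    -2 * Real.log
      ((∫ t in Set.Ioi (0 : ℝ),
          (2 * Real.pi) ^ (-(n : ℝ) / 2) *
            Real.exp (-((n : ℝ) / 2 + 1) * Real.log t - n * s0 / (2 * t))) /
       (∫ t in Set.Ioi (0 : ℝ),
          (2 * Real.pi) ^ (-(n : ℝ) / 2) *
            Real.exp (-((n : ℝ) / 2 + 1) * Real.log t - n * s1 / (2 * t)
              - (1 / 2) * Real.log n)))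
      = (n : ℝ) * Real.log s0 - (n : ℝ) * Real.log s1 - Real.log n := by
  have hnpos : (0:ℝ) < n := by exact_mod_cast hn
  set C : ℝ := (2 * Real.pi) ^ (-(n : ℝ) / 2) with hC
  have hCpos : 0 < C := Real.rpow_pos_of_pos (by positivity) _
  have hspos : 0 < (n:ℝ)/2 := by positivity
  have ha0 : 0 < (n:ℝ) * s0 / 2 := by positivity
  have ha1 : 0 < (n:ℝ) * s1 / 2 := by positivity
  have e0 : (∫ t in Set.Ioi (0 : ℝ),
        C * Real.exp (-((n : ℝ) / 2 + 1) * Real.log t - n * s0 / (2 * t)))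
      = C * ((1/((n:ℝ)*s0/2)) ^ ((n:ℝ)/2) * Real.Gamma ((n:ℝ)/2)) := by
    rw [MeasureTheory.integral_const_mul,
      ← cake_key ((n:ℝ)/2) ((n:ℝ)*s0/2) hspos ha0]
    have : ∀ t ∈ Set.Ioi (0:ℝ),
        Real.exp (-((n : ℝ) / 2 + 1) * Real.log t - n * s0 / (2 * t))
        = Real.exp (-((n:ℝ)/2 + 1) * Real.log t - ((n:ℝ)*s0/2) / t) := by
      intro t _
      rw [div_div]
    rw [setIntegral_congr_fun measurableSet_Ioi this]
  have e1 : (∫ t in Set.Ioi (0 : ℝ),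
        C * Real.exp (-((n : ℝ) / 2 + 1) * Real.log t - n * s1 / (2 * t)
          - (1 / 2) * Real.log n))
      = (C * Real.exp (-((1:ℝ)/2) * Real.log n)) *
          ((1/((n:ℝ)*s1/2)) ^ ((n:ℝ)/2) * Real.Gamma ((n:ℝ)/2)) := by
    have h : ∀ t ∈ Set.Ioi (0:ℝ),
        C * Real.exp (-((n : ℝ) / 2 + 1) * Real.log t - n * s1 / (2 * t)
          - (1 / 2) * Real.log n)
        = (C * Real.exp (-((1:ℝ)/2) * Real.log n)) *
            Real.exp (-(((n:ℝ)/2) + 1) * Real.log t - ((n:ℝ)*s1/2) / t) := by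
      intro t _
      rw [mul_assoc, ← Real.exp_add]
      congr 2
      rw [div_div]
      ring
    rw [setIntegral_congr_fun measurableSet_Ioi h,
      MeasureTheory.integral_const_mul, cake_key ((n:ℝ)/2) ((n:ℝ)*s1/2) hspos ha1]
  rw [e0, e1]
  have hG : 0 < Real.Gamma ((n:ℝ)/2) := Real.Gamma_pos_of_pos hspos
  have hp0 : 0 < (1/((n:ℝ)*s0/2)) ^ ((n:ℝ)/2) := Real.rpow_pos_of_pos (by positivity) _
  have hp1 : 0 < (1/((n:ℝ)*s1/2)) ^ ((n:ℝ)/2) := Real.rpow_pos_of_pos (by positivity) _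
  have hexp : 0 < Real.exp (-((1:ℝ)/2) * Real.log n) := Real.exp_pos _
  rw [Real.log_div (by positivity) (by positivity),
    Real.log_mul hCpos.ne' (mul_pos hp0 hG).ne',
    Real.log_mul (mul_pos hCpos hexp).ne' (mul_pos hp1 hG).ne',
    Real.log_mul hCpos.ne' hexp.ne', Real.log_mul hp1.ne' hG.ne',
    Real.log_mul hp0.ne' hG.ne', Real.log_exp,
    Real.log_rpow (show (0:ℝ) < 1/((n:ℝ)*s0/2) by positivity),
    Real.log_rpow (show (0:ℝ) < 1/((n:ℝ)*s1/2) by positivity),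
    one_div ((n:ℝ)*s0/2), one_div ((n:ℝ)*s1/2), Real.log_inv, Real.log_inv,
    Real.log_div (by positivity) (by norm_num),
    Real.log_div (by positivity) (by norm_num),
    Real.log_mul hnpos.ne' hs0pos.ne', Real.log_mul hnpos.ne' hs1pos.ne']
  ring
end

section
/- For the two-sample normal test with unequal variances and cake priors, the exact Bayesian test statistic λ_Bayes = λ_LRT − 3 ln n − 2ξ(n/2) + 2ξ(n₀/2) + 2ξ(n₁/2) + ln(n₀n₁/2) satisfies λ_Bayes = λ_LRT − 2 ln n + O(1/n₀ + 1/n₁), i.e., |λ_Bayes − λ_LRT + 2 ln n| ≤ C(1/n₀ + 1/n₁) for some constant C when n₀, n₁ ≥ 2 and n = n₀ + n₁. -/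
open Real

noncomputable def xiFn (x : ℝ) : ℝ :=
  Real.log (Real.Gamma x) + x - x * Real.log x - (1 / 2) * Real.log (2 * Real.pi)

lemma le_log_one_add {t : ℝ} (ht : 0 ≤ t) : t - t^2/2 ≤ Real.log (1+t) := by
  have key : MonotoneOn (fun s : ℝ => Real.log (1+s) - (s - s^2/2)) (Set.Ici 0) := by
    have hder : ∀ s : ℝ, 0 ≤ s →
        HasDerivAt (fun s : ℝ => Real.log (1+s) - (s - s^2/2)) (1/(1+s) - (1 - s)) s := by
      intro s hs
      have h1 : HasDerivAt (fun s : ℝ => 1 + s) 1 s := (hasDerivAt_id s).const_add 1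
      have h2 : HasDerivAt (fun s : ℝ => Real.log (1+s)) (1/(1+s)) s := by
        simpa using h1.log (by linarith)
      have h3 : HasDerivAt (fun s : ℝ => s - s^2/2) (1 - s) s := by
        have := ((hasDerivAt_pow 2 s).div_const 2)
        simpa using (hasDerivAt_id' s).fun_sub this
      exact h2.sub h3
    apply monotoneOn_of_deriv_nonneg (convex_Ici 0)
    · exact fun s hs => ((hder s hs).sub_const 0).continuousAt.continuousWithinAt |>.congr
        (fun y hy => by ring_nf) (by ring_nf)
    · intro s hs
      rw [interior_Ici] at hs
      exact ((hder s (le_of_lt hs)).differentiableAt).differentiableWithinAt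
    · intro s hs
      rw [interior_Ici] at hs
      rw [(hder s hs.le).deriv]
      have hs2 : 0 < s := Set.mem_Ioi.mp hs
      have h1 : (0:ℝ) < 1 + s := by linarith
      have : 1/(1+s) - (1-s) = s^2/(1+s) := by field_simp; ring
      rw [this]; positivity
  have h0 := key (Set.mem_Ici.mpr le_rfl) (Set.mem_Ici.mpr ht) ht
  simpa using h0

lemma log_one_add_le {t : ℝ} (ht : 0 ≤ t) : Real.log (1+t) ≤ t - t^2/2 + t^3/3 := by
  have key : MonotoneOn (fun s : ℝ => (s - s^2/2 + s^3/3) - Real.log (1+s)) (Set.Ici 0) := by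
    have hder : ∀ s : ℝ, 0 ≤ s →
        HasDerivAt (fun s : ℝ => (s - s^2/2 + s^3/3) - Real.log (1+s))
          ((1 - s + s^2) - 1/(1+s)) s := by
      intro s hs
      have h1 : HasDerivAt (fun s : ℝ => 1 + s) 1 s := (hasDerivAt_id s).const_add 1
      have h2 : HasDerivAt (fun s : ℝ => Real.log (1+s)) (1/(1+s)) s := by
        simpa using h1.log (by linarith)
      have h3 : HasDerivAt (fun s : ℝ => s - s^2/2 + s^3/3) (1 - s + s^2) s := by
        have p2 := ((hasDerivAt_pow 2 s).div_const 2)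
        have p3 := ((hasDerivAt_pow 3 s).div_const 3)
        have := ((hasDerivAt_id' s).fun_sub p2).fun_add p3
        refine this.congr_deriv ?_
        push_cast; ring
      exact h3.sub h2
    apply monotoneOn_of_deriv_nonneg (convex_Ici 0)
    · exact fun s hs => ((hder s hs)).continuousAt.continuousWithinAt
    · intro s hs
      rw [interior_Ici] at hs
      exact ((hder s hs.le).differentiableAt).differentiableWithinAt
    · intro s hs
      rw [interior_Ici] at hs
      rw [(hder s hs.le).deriv]
      have hs2 : 0 < s := Set.mem_Ioi.mp hs
      have h1 : (0:ℝ) < 1 + s := by linarith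
      have : (1 - s + s^2) - 1/(1+s) = s^3/(1+s) := by field_simp; ring
      rw [this]; positivity
  have h0 := key (Set.mem_Ici.mpr le_rfl) (Set.mem_Ici.mpr ht) ht
  simp at h0
  linarith

lemma central {t : ℝ} (ht : 0 < t) (ht1 : t ≤ 1) :
    |(1/t + 1/2) * Real.log (1+t) - 1| ≤ t^2/4 := by
  have h1 := log_one_add_le ht.le
  have h2 := le_log_one_add ht.le
  have hc : (0:ℝ) ≤ 1/t + 1/2 := by positivity
  have hu := mul_le_mul_of_nonneg_left h1 hc
  have hl := mul_le_mul_of_nonneg_left h2 hc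
  have e1 : (1/t + 1/2) * (t - t^2/2 + t^3/3) = 1 + t^2/12 + t^3/6 := by
    field_simp; ring
  have e2 : (1/t + 1/2) * (t - t^2/2) = 1 - t^2/4 := by
    field_simp; ring
  rw [e1] at hu; rw [e2] at hl
  rw [abs_le]
  constructor
  · linarith
  · nlinarith [sq_nonneg t, mul_le_mul_of_nonneg_right ht1 (sq_nonneg t)]

lemma central2 {t : ℝ} (ht : 0 < t) (ht1 : t ≤ 1) :
    |(1/t) * Real.log (1+t) - 1| ≤ t/2 := by
  have h1 := log_one_add_le ht.le
  have h2 := le_log_one_add ht.le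
  have hc : (0:ℝ) ≤ 1/t := by positivity
  have hu := mul_le_mul_of_nonneg_left h1 hc
  have hl := mul_le_mul_of_nonneg_left h2 hc
  have e1 : (1/t) * (t - t^2/2 + t^3/3) = 1 - t/2 + t^2/3 := by field_simp
  have e2 : (1/t) * (t - t^2/2) = 1 - t/2 := by field_simp
  rw [e1] at hu; rw [e2] at hl
  rw [abs_le]
  constructor
  · linarith
  · nlinarith [mul_le_mul_of_nonneg_right ht1 ht.le]

noncomputable def rFn (x : ℝ) : ℝ :=
  Real.log (Real.Gamma x) - (x - 1/2) * Real.log x + x - (1/2) * Real.log (2 * Real.pi)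

lemma rFn_sub_succ {x : ℝ} (hx : 0 < x) :
    rFn x - rFn (x+1) = (x + 1/2) * Real.log (1 + 1/x) - 1 := by
  have hΓ : Real.Gamma (x+1) = x * Real.Gamma x := Real.Gamma_add_one hx.ne'
  have hΓpos : 0 < Real.Gamma x := Real.Gamma_pos_of_pos hx
  have hq : (1:ℝ) + 1/x = (x+1)/x := by field_simp
  rw [rFn, rFn, hΓ, Real.log_mul hx.ne' hΓpos.ne', hq,
    Real.log_div (by linarith) hx.ne']
  ring

lemma rFn_diff_abs {x : ℝ} (hx : 1 ≤ x) :
    |rFn x - rFn (x+1)| ≤ 1/x - 1/(x+1) := by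
  have hx0 : (0:ℝ) < x := by linarith
  rw [rFn_sub_succ hx0]
  have ht : (0:ℝ) < 1/x := by positivity
  have ht1 : 1/x ≤ 1 := by rw [div_le_one hx0]; linarith
  have h := central ht ht1
  rw [one_div_one_div] at h
  refine h.trans ?_
  have e : (1/x)^2/4 = 1/(4*x^2) := by field_simp
  rw [e, div_sub_div _ _ hx0.ne' (by positivity : (x+1:ℝ) ≠ 0),
    div_le_div_iff₀ (by positivity) (by positivity)]
  nlinarith [sq_nonneg x]

lemma rFn_tail {x : ℝ} (hx : 1 ≤ x) (m : ℕ) :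
    |rFn x - rFn (x+m)| ≤ 1/x - 1/(x+m) := by
  induction m with
  | zero => simp
  | succ k ih =>
    have hxk : 1 ≤ x + k := by
      have : (0:ℝ) ≤ k := Nat.cast_nonneg k
      linarith
    have h2 := rFn_diff_abs hxk
    have e : x + ↑(k+1) = (x + k) + 1 := by push_cast; ring
    rw [e]
    calc |rFn x - rFn (x + k + 1)|
        ≤ |rFn x - rFn (x+k)| + |rFn (x+k) - rFn (x+k+1)| := by
          have := abs_sub_le (rFn x) (rFn (x+k)) (rFn (x+k+1)); linarith [this]
      _ ≤ (1/x - 1/(x+k)) + (1/(x+k) - 1/(x+k+1)) := add_le_add ih h2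
      _ = 1/x - 1/(x+k+1) := by ring

lemma rFn_succ_eq (n : ℕ) (hn : 1 ≤ n) :
    rFn ((n:ℝ) + 1) = Real.log (Stirling.stirlingSeq n / √π)
      + (1 - ((n:ℝ) + 1/2) * Real.log (1 + 1/(n:ℝ))) := by
  have hn0 : (0:ℝ) < n := by exact_mod_cast hn
  have hfac : (0:ℝ) < (Nat.factorial n : ℝ) := by exact_mod_cast n.factorial_pos
  have hssq : Stirling.stirlingSeq n
      = (Nat.factorial n : ℝ) / (√(2 * n : ℝ) * ((n:ℝ) / exp 1) ^ n) := rfl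
  have hΓ : Real.Gamma ((n:ℝ) + 1) = Nat.factorial n := Real.Gamma_nat_eq_factorial n
  have hsp : (0:ℝ) < Stirling.stirlingSeq n := by
    rw [hssq]; positivity
  rw [Real.log_div hsp.ne' (by positivity : √π ≠ 0), Stirling.log_stirlingSeq_formula,
    Real.log_sqrt pi_pos.le, Real.log_mul two_ne_zero hn0.ne',
    Real.log_div hn0.ne' (exp_ne_zero 1), Real.log_exp]
  have hq : (1:ℝ) + 1/(n:ℝ) = ((n:ℝ)+1)/(n:ℝ) := by field_simp
  rw [rFn, hΓ, hq, Real.log_div (by linarith) hn0.ne',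
    Real.log_mul two_ne_zero pi_ne_zero]
  ring

lemma tendsto_rFn_nat : Filter.Tendsto (fun n : ℕ => rFn n) Filter.atTop (nhds 0) := by
  have hπ : (0:ℝ) < √π := Real.sqrt_pos.mpr pi_pos
  have h1 : Filter.Tendsto (fun n : ℕ => Stirling.stirlingSeq n / √π) Filter.atTop (nhds 1) := by
    have := Stirling.tendsto_stirlingSeq_sqrt_pi.div_const (√π)
    rwa [div_self hπ.ne'] at this
  have h2 : Filter.Tendsto (fun n : ℕ => Real.log (Stirling.stirlingSeq n / √π))
      Filter.atTop (nhds 0) := by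
    have := (Real.continuousAt_log one_ne_zero).tendsto.comp h1
    simpa [Function.comp_def] using this
  have h3 : Filter.Tendsto (fun n : ℕ => 1 - ((n:ℝ) + 1/2) * Real.log (1 + 1/(n:ℝ)))
      Filter.atTop (nhds 0) := by
    apply squeeze_zero_norm' (a := fun n : ℕ => 1/(4*(n:ℝ)^2))
    · filter_upwards [Filter.eventually_ge_atTop 1] with n h
      have hn0 : (0:ℝ) < n := by exact_mod_cast h
      have ht : (0:ℝ) < 1/(n:ℝ) := by positivity
      have ht1 : 1/(n:ℝ) ≤ 1 := by
        rw [div_le_one hn0]; exact_mod_cast h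
      have hc := central ht ht1
      rw [one_div_one_div] at hc
      rw [Real.norm_eq_abs, abs_sub_comm]
      refine hc.trans (le_of_eq (by field_simp))
    · have hat : Filter.Tendsto (fun n : ℕ => 4*(n:ℝ)^2) Filter.atTop Filter.atTop := by
        apply Filter.tendsto_atTop_mono (fun n : ℕ => ?_) tendsto_natCast_atTop_atTop
        have : n ≤ 4*n^2 := by nlinarith [Nat.le_self_pow two_ne_zero n]
        exact_mod_cast this
      exact hat.inv_tendsto_atTop.congr (fun n => by simp [one_div])
  have h4 : Filter.Tendsto (fun n : ℕ => rFn ((n:ℝ)+1)) Filter.atTop (nhds 0) := by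
    have := h2.add h3
    rw [add_zero] at this
    apply this.congr'
    filter_upwards [Filter.eventually_ge_atTop 1] with n hn
    exact (rFn_succ_eq n hn).symm
  refine (Filter.tendsto_add_atTop_iff_nat (f := fun n : ℕ => rFn n) 1).mp (h4.congr ?_)
  intro n
  congr 1
  push_cast; ring

lemma rFn_half_identity {x : ℝ} (hx : 0 < x) :
    rFn (x + 1/2) = rFn (2*x) - rFn x + (1 - (2*x) * Real.log (1 + 1/(2*x)))/2 := by
  have h1 : Real.Gamma x * Real.Gamma (x + 1/2)
      = Real.Gamma (2*x) * (2:ℝ)^(1 - 2*x) * √π := Real.Gamma_mul_Gamma_add_half x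
  have hx2 : (0:ℝ) < 2*x := by linarith
  have hxh : (0:ℝ) < x + 1/2 := by linarith
  have hg1 : (0:ℝ) < Real.Gamma x := Real.Gamma_pos_of_pos hx
  have hg2 : (0:ℝ) < Real.Gamma (x + 1/2) := Real.Gamma_pos_of_pos hxh
  have hg3 : (0:ℝ) < Real.Gamma (2*x) := Real.Gamma_pos_of_pos hx2
  have hrp : (0:ℝ) < (2:ℝ)^(1 - 2*x) := Real.rpow_pos_of_pos two_pos _
  have hlog : Real.log (Real.Gamma x) + Real.log (Real.Gamma (x + 1/2))
      = Real.log (Real.Gamma (2*x)) + (1 - 2*x) * Real.log 2 + Real.log π / 2 := by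
    have := congrArg Real.log h1
    rwa [Real.log_mul hg1.ne' hg2.ne', Real.log_mul (by positivity) (by positivity),
      Real.log_mul hg3.ne' hrp.ne', Real.log_rpow two_pos, Real.log_sqrt pi_pos.le] at this
  have hq : (1:ℝ) + 1/(2*x) = (x + 1/2)/x := by field_simp
  have hl2x : Real.log (2*x) = Real.log 2 + Real.log x := Real.log_mul two_ne_zero hx.ne'
  have hl2π : Real.log (2*π) = Real.log 2 + Real.log π := Real.log_mul two_ne_zero pi_ne_zero
  rw [rFn, rFn, rFn, hq, Real.log_div hxh.ne' hx.ne', hl2x, hl2π]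
  linear_combination hlog

lemma tendsto_rFn_half :
    Filter.Tendsto (fun m : ℕ => rFn ((m:ℝ) + 1/2)) Filter.atTop (nhds 0) := by
  have hd : Filter.Tendsto (fun m : ℕ => 2*m) Filter.atTop Filter.atTop :=
    Filter.tendsto_atTop_mono (fun m => by simp only [id]; omega) Filter.tendsto_id
  have h2m : Filter.Tendsto (fun m : ℕ => rFn ((2*m : ℕ))) Filter.atTop (nhds 0) :=
    tendsto_rFn_nat.comp hd
  have hm : Filter.Tendsto (fun m : ℕ => rFn (m:ℝ)) Filter.atTop (nhds 0) := tendsto_rFn_nat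
  have h3 : Filter.Tendsto (fun m : ℕ => (1 - (2*(m:ℝ)) * Real.log (1 + 1/(2*(m:ℝ))))/2)
      Filter.atTop (nhds 0) := by
    apply squeeze_zero_norm' (a := fun m : ℕ => 1/(8*(m:ℝ)))
    · filter_upwards [Filter.eventually_ge_atTop 1] with m h
      have hm0 : (0:ℝ) < m := by exact_mod_cast h
      have ht : (0:ℝ) < 1/(2*(m:ℝ)) := by positivity
      have ht1 : 1/(2*(m:ℝ)) ≤ 1 := by
        rw [div_le_one (by positivity)]
        have : (1:ℝ) ≤ m := by exact_mod_cast h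
        linarith
      have hc := central2 ht ht1
      rw [one_div_one_div] at hc
      rw [Real.norm_eq_abs, abs_div, abs_sub_comm, abs_of_pos (by norm_num : (0:ℝ) < 2)]
      have he : (1/(2*(m:ℝ))/2)/2 = 1/(8*(m:ℝ)) := by field_simp; ring
      linarith [hc, he]
    · have hat : Filter.Tendsto (fun m : ℕ => 8*(m:ℝ)) Filter.atTop Filter.atTop := by
        apply Filter.tendsto_atTop_mono (fun m : ℕ => ?_) tendsto_natCast_atTop_atTop
        have h8 : (1:ℝ) ≤ 8 := by norm_num
        nlinarith [Nat.cast_nonneg (α := ℝ) m]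
      exact hat.inv_tendsto_atTop.congr (fun m => by simp [one_div])
  have key : Filter.Tendsto (fun m : ℕ => rFn ((m:ℝ) + 1/2)) Filter.atTop (nhds 0) := by
    have hsum := (h2m.sub hm).add h3
    rw [sub_zero, add_zero] at hsum
    apply hsum.congr'
    filter_upwards [Filter.eventually_ge_atTop 1] with m h
    have hm0 : (0:ℝ) < m := by exact_mod_cast h
    rw [rFn_half_identity hm0]
    push_cast
    ring
  exact key

lemma rFn_bound (c : ℕ) (hc : 2 ≤ c) : |rFn ((c:ℝ)/2)| ≤ 2/(c:ℝ) := by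
  set x : ℝ := (c:ℝ)/2 with hxdef
  have hc0 : (0:ℝ) < c := by exact_mod_cast Nat.lt_of_lt_of_le two_pos hc
  have hx1 : 1 ≤ x := by
    rw [hxdef, le_div_iff₀ two_pos]
    exact_mod_cast hc
  have htail : Filter.Tendsto (fun m : ℕ => |rFn (x + m)|) Filter.atTop (nhds 0) := by
    rcases Nat.even_or_odd c with ⟨k, hk⟩ | ⟨k, hk⟩
    · have hxk : x = (k:ℝ) := by
        rw [hxdef, hk]; push_cast; ring
      have : Filter.Tendsto (fun m : ℕ => rFn (x + m)) Filter.atTop (nhds 0) := by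
        have hcomp := tendsto_rFn_nat.comp
          (Filter.tendsto_atTop_mono (fun m : ℕ => Nat.le_add_left m k) Filter.tendsto_id
            : Filter.Tendsto (fun m : ℕ => k + m) Filter.atTop Filter.atTop)
        apply hcomp.congr
        intro m
        simp only [Function.comp_apply, hxk]
        push_cast; ring
      simpa using this.abs
    · have hxk : x = (k:ℝ) + 1/2 := by
        rw [hxdef, hk]; push_cast; ring
      have : Filter.Tendsto (fun m : ℕ => rFn (x + m)) Filter.atTop (nhds 0) := by
        have hcomp := tendsto_rFn_half.comp
          (Filter.tendsto_atTop_mono (fun m : ℕ => Nat.le_add_left m k) Filter.tendsto_id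
            : Filter.Tendsto (fun m : ℕ => k + m) Filter.atTop Filter.atTop)
        apply hcomp.congr
        intro m
        simp only [Function.comp_apply, hxk]
        push_cast; ring
      simpa using this.abs
  have hle : ∀ m : ℕ, |rFn x| - 1/x ≤ |rFn (x + m)| := by
    intro m
    have h1 := rFn_tail hx1 m
    have h2 : |rFn x| ≤ |rFn x - rFn (x+m)| + |rFn (x+m)| := by
      have := abs_sub_abs_le_abs_sub (rFn x) (rFn (x+m))
      have h3 := abs_sub (rFn x) (rFn (x+m))
      nlinarith [abs_sub_le (rFn x) (rFn (x+m)) 0, abs_nonneg (rFn (x+m))]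
    have hpos : 0 ≤ 1/(x+m) := by positivity
    linarith
  have := ge_of_tendsto' htail hle
  have hx2 : 1/x = 2/(c:ℝ) := by
    rw [hxdef]; field_simp
  linarith [this, hx2.symm.le, hx2.le]

lemma xiFn_eq (x : ℝ) : xiFn x = rFn x - (1/2) * Real.log x := by
  rw [xiFn, rFn]; ring

/-- Two-sample test with cake priors: the exact penalization
−3 ln n − 2ξ(n/2) + 2ξ(n₀/2) + 2ξ(n₁/2) + ln(n₀n₁/2) equals −2 ln n up to
O(1/n₀ + 1/n₁), i.e. |λ_Bayes − λ_LRT + 2 ln n| ≤ C (1/n₀ + 1/n₁). -/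
theorem two_sample_cake_penalty :
    ∃ C : ℝ, ∀ n₀ n₁ : ℕ, 2 ≤ n₀ → 2 ≤ n₁ → ∀ lrt : ℝ,
      |(lrt - 3 * Real.log (n₀ + n₁ : ℝ) - 2 * xiFn ((n₀ + n₁ : ℝ) / 2)
          + 2 * xiFn ((n₀ : ℝ) / 2) + 2 * xiFn ((n₁ : ℝ) / 2)
          + Real.log ((n₀ : ℝ) * n₁ / 2))
        - lrt + 2 * Real.log (n₀ + n₁ : ℝ)|
        ≤ C * (1 / (n₀ : ℝ) + 1 / (n₁ : ℝ)) := by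
  refine ⟨8, fun n₀ n₁ h0 h1 lrt => ?_⟩
  have ha : (0:ℝ) < n₀ := by exact_mod_cast Nat.lt_of_lt_of_le two_pos h0
  have hb : (0:ℝ) < n₁ := by exact_mod_cast Nat.lt_of_lt_of_le two_pos h1
  have hab : (0:ℝ) < (n₀:ℝ) + n₁ := by linarith
  have key : (lrt - 3 * Real.log (n₀ + n₁ : ℝ) - 2 * xiFn ((n₀ + n₁ : ℝ) / 2)
          + 2 * xiFn ((n₀ : ℝ) / 2) + 2 * xiFn ((n₁ : ℝ) / 2)
          + Real.log ((n₀ : ℝ) * n₁ / 2))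
        - lrt + 2 * Real.log (n₀ + n₁ : ℝ)
      = -2 * rFn (((n₀:ℝ) + n₁)/2) + 2 * rFn ((n₀:ℝ)/2) + 2 * rFn ((n₁:ℝ)/2) := by
    rw [xiFn_eq, xiFn_eq, xiFn_eq,
      Real.log_div (by positivity) two_ne_zero,
      Real.log_div ha.ne' two_ne_zero,
      Real.log_div hb.ne' two_ne_zero,
      Real.log_div (by positivity) two_ne_zero,
      Real.log_mul ha.ne' hb.ne']
    ring
  rw [key]
  have b1 : |rFn (((n₀:ℝ) + n₁)/2)| ≤ 2/((n₀:ℝ) + n₁) := by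
    have := rFn_bound (n₀ + n₁) (by omega)
    push_cast at this
    exact this
  have b2 : |rFn ((n₀:ℝ)/2)| ≤ 2/(n₀:ℝ) := rFn_bound n₀ h0
  have b3 : |rFn ((n₁:ℝ)/2)| ≤ 2/(n₁:ℝ) := rFn_bound n₁ h1
  have hmono : 2/((n₀:ℝ) + n₁) ≤ 2/(n₀:ℝ) := by
    apply div_le_div_of_nonneg_left (by norm_num) ha
    linarith
  have habs : |(-2) * rFn (((n₀:ℝ) + n₁)/2) + 2 * rFn ((n₀:ℝ)/2) + 2 * rFn ((n₁:ℝ)/2)|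
      ≤ 2 * |rFn (((n₀:ℝ) + n₁)/2)| + 2 * |rFn ((n₀:ℝ)/2)| + 2 * |rFn ((n₁:ℝ)/2)| := by
    calc |(-2) * rFn (((n₀:ℝ) + n₁)/2) + 2 * rFn ((n₀:ℝ)/2) + 2 * rFn ((n₁:ℝ)/2)|
        ≤ |(-2) * rFn (((n₀:ℝ) + n₁)/2) + 2 * rFn ((n₀:ℝ)/2)| + |2 * rFn ((n₁:ℝ)/2)| :=
          abs_add_le _ _
      _ ≤ |(-2) * rFn (((n₀:ℝ) + n₁)/2)| + |2 * rFn ((n₀:ℝ)/2)| + |2 * rFn ((n₁:ℝ)/2)| := by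
          linarith [abs_add_le ((-2) * rFn (((n₀:ℝ) + n₁)/2)) (2 * rFn ((n₀:ℝ)/2))]
      _ = 2 * |rFn (((n₀:ℝ) + n₁)/2)| + 2 * |rFn ((n₀:ℝ)/2)| + 2 * |rFn ((n₁:ℝ)/2)| := by
          rw [abs_mul, abs_mul, abs_mul]; norm_num
  have hfin : 2 * (2/((n₀:ℝ) + n₁)) + 2 * (2/(n₀:ℝ)) + 2 * (2/(n₁:ℝ))
      ≤ 8 * (1/(n₀:ℝ) + 1/(n₁:ℝ)) := by
    have e1 : 2/(n₀:ℝ) = 2 * (1/(n₀:ℝ)) := by ring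
    have e2 : 2/(n₁:ℝ) = 2 * (1/(n₁:ℝ)) := by ring
    nlinarith [hmono, one_div_pos.mpr ha, one_div_pos.mpr hb]
  calc |(-2) * rFn (((n₀:ℝ) + n₁)/2) + 2 * rFn ((n₀:ℝ)/2) + 2 * rFn ((n₁:ℝ)/2)|
      ≤ 2 * |rFn (((n₀:ℝ) + n₁)/2)| + 2 * |rFn ((n₀:ℝ)/2)| + 2 * |rFn ((n₁:ℝ)/2)| := habs
    _ ≤ 2 * (2/((n₀:ℝ) + n₁)) + 2 * (2/(n₀:ℝ)) + 2 * (2/(n₁:ℝ)) := by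
        linarith [b1, b2, b3]
    _ ≤ 8 * (1/(n₀:ℝ) + 1/(n₁:ℝ)) := hfin
end

section
/- In the linear model with cake priors, as h → ∞, λ_Bayes = BIC_{γ₀} − BIC_{γ₁} = λ_LRT − ν ln n, where λ_LRT = n ln σ̂²_{γ₀} − n ln σ̂²_{γ₁}, ν = |γ₁| − |γ₀|, and BIC_γ = n ln(2π σ̂²_γ) − n + |γ| ln n. -/
open Real Filter

/-- `h^(1/(1+k)) / (1 + h^(1/(1+k))) → 1` as `h → ∞`. -/
lemma cake_frac_tendsto (k : ℕ) :
    Tendsto (fun h : ℝ => h ^ ((1 : ℝ) / (1 + k)) / (1 + h ^ ((1 : ℝ) / (1 + k))))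
      atTop (nhds 1) := by
  have h1 : Tendsto (fun h : ℝ => h ^ ((1 : ℝ) / (1 + k))) atTop atTop :=
    tendsto_rpow_atTop (by positivity)
  have h2 : Tendsto (fun x : ℝ => x / (1 + x)) atTop (nhds 1) := by
    have h3 : Tendsto (fun x : ℝ => x⁻¹ + 1) atTop (nhds (0 + 1)) :=
      tendsto_inv_atTop_zero.add tendsto_const_nhds
    have h4 : Tendsto (fun x : ℝ => (x⁻¹ + 1)⁻¹) atTop (nhds 1) := by
      simpa using h3.inv₀ (by norm_num)
    refine h4.congr' ?_
    filter_upwards [eventually_gt_atTop (0 : ℝ)] with x hx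
    field_simp
  exact h2.comp h1

/-- `log(1 - frac * R) → log(1 - R)`. -/
lemma cake_logA (k : ℕ) (R : ℝ) (hR : R < 1) :
    Tendsto (fun h : ℝ => Real.log (1 - h ^ ((1 : ℝ) / (1 + k)) /
        (1 + h ^ ((1 : ℝ) / (1 + k))) * R)) atTop (nhds (Real.log (1 - R))) := by
  have h1 : Tendsto (fun h : ℝ => 1 - h ^ ((1 : ℝ) / (1 + k)) /
      (1 + h ^ ((1 : ℝ) / (1 + k))) * R) atTop (nhds (1 - 1 * R)) :=
    tendsto_const_nhds.sub ((cake_frac_tendsto k).mul tendsto_const_nhds)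
  have hne : (1 : ℝ) - 1 * R ≠ 0 := by nlinarith
  have := ((Real.continuousAt_log hne).tendsto).comp h1
  simpa [Function.comp_def] using this

/-- `log(n + h^(-1/(1+k))) → log n`. -/
lemma cake_logB (n : ℕ) (hn : 1 ≤ n) (k : ℕ) :
    Tendsto (fun h : ℝ => Real.log ((n : ℝ) + h ^ (-(1 : ℝ) / (1 + k))))
      atTop (nhds (Real.log n)) := by
  have h0 : Tendsto (fun h : ℝ => h ^ (-((1 : ℝ) / (1 + k)))) atTop (nhds 0) :=
    tendsto_rpow_neg_atTop (by positivity)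
  have h1 : Tendsto (fun h : ℝ => (n : ℝ) + h ^ (-(1 : ℝ) / (1 + k)))
      atTop (nhds ((n : ℝ) + 0)) := by
    refine tendsto_const_nhds.add ?_
    simpa [neg_div] using h0
  have hne : (n : ℝ) + 0 ≠ 0 := by
    have : (1 : ℝ) ≤ (n : ℝ) := by exact_mod_cast hn
    linarith
  have := ((Real.continuousAt_log hne).tendsto).comp h1
  simpa [Function.comp_def] using this

/-- Linear model with cake priors: as h → ∞,
λ_Bayes = −2 ln BF₀₁(h) → n ln σ̂²_{γ₀} − n ln σ̂²_{γ₁} − (|γ₁| − |γ₀|) ln n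
= BIC_{γ₀} − BIC_{γ₁} = λ_LRT − ν ln n. -/
theorem linear_model_cake_limit (n : ℕ) (hn : 1 ≤ n) (k₀ k₁ : ℕ)
    (R0 R1 : ℝ) (hR0 : 0 ≤ R0 ∧ R0 < 1) (hR1 : 0 ≤ R1 ∧ R1 < 1) :
    Tendsto (fun h : ℝ =>
      -2 * Real.log (Real.exp (
        -((n : ℝ) / 2) * Real.log (1 - h ^ ((1 : ℝ) / (1 + k₀)) /
            (1 + h ^ ((1 : ℝ) / (1 + k₀))) * R0)
        + ((n : ℝ) / 2) * Real.log (1 - h ^ ((1 : ℝ) / (1 + k₁)) /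
            (1 + h ^ ((1 : ℝ) / (1 + k₁))) * R1)
        - ((1 + (k₀ : ℝ)) / 2) * Real.log ((n : ℝ) + h ^ (-(1 : ℝ) / (1 + k₀)))
        + ((1 + (k₁ : ℝ)) / 2) * Real.log ((n : ℝ) + h ^ (-(1 : ℝ) / (1 + k₁))))))
      atTop
      (nhds ((n : ℝ) * Real.log (1 - R0) - (n : ℝ) * Real.log (1 - R1)
        - ((k₁ : ℝ) - (k₀ : ℝ)) * Real.log n)) := by
  have main :=
    (((((cake_logA k₀ R0 hR0.2).const_mul (-((n : ℝ) / 2))).add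
      ((cake_logA k₁ R1 hR1.2).const_mul ((n : ℝ) / 2))).sub
      ((cake_logB n hn k₀).const_mul ((1 + (k₀ : ℝ)) / 2))).add
      ((cake_logB n hn k₁).const_mul ((1 + (k₁ : ℝ)) / 2))).const_mul (-2 : ℝ)
  simp only [Real.log_exp]
  convert main using 2
  ring
end
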